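/- For all 0 < Λ < M ≤ P, all 0 ≤ η ≤ M, and every natural number k, there exists C_k > 0 such that ∫_Λ^M (log₊(P/λ))^k / (λ+η) dλ < C_k (1 + (log₊(P/(Λ+η)))^{k+1}). -/

import Mathlib

noncomputable def logPlus (x : ℝ) : ℝ := Real.log (max 1 x)

open Real MeasureTheory intervalIntegral

lemma logPlus_nonneg (x : ℝ) : 0 ≤ logPlus x := Real.log_nonneg (le_max_left 1 x)

lemma log_le_logPlus {x : ℝ} (hx : 0 < x) : Real.log x ≤ logPlus x :=
  Real.log_le_log hx (le_max_right 1 x)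

lemma two_pow_bound (n : ℕ) {s t : ℝ} (hs : 0 ≤ s) (ht : 0 ≤ t) :
    (s + t) ^ n ≤ 2 ^ n * (s ^ n + t ^ n) := by
  calc (s + t) ^ n ≤ (2 * max s t) ^ n := by
        apply pow_le_pow_left₀ (by positivity)
        rcases le_total s t with h | h
        · rw [max_eq_right h]; linarith
        · rw [max_eq_left h]; linarith
    _ = 2 ^ n * (max s t) ^ n := mul_pow _ _ _
    _ ≤ 2 ^ n * (s ^ n + t ^ n) := by
        apply mul_le_mul_of_nonneg_left _ (by positivity)
        rcases le_total s t with h | h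
        · rw [max_eq_right h]; nlinarith [pow_nonneg hs n]
        · rw [max_eq_left h]; nlinarith [pow_nonneg ht n]

lemma exp_half_log {x : ℝ} (hx : 0 < x) : Real.exp (Real.log x / 2) = Real.sqrt x := by
  rw [Real.sqrt_eq_rpow, Real.rpow_def_of_pos hx]
  ring_nf

lemma pow_le_exp_half (k : ℕ) {t : ℝ} (ht : 0 ≤ t) :
    t ^ k ≤ 2 ^ k * (k.factorial : ℝ) * Real.exp (t / 2) := by
  have h := Real.pow_div_factorial_le_exp (t / 2) (by linarith) k
  have hfac : (0:ℝ) < k.factorial := by positivity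
  have h2 : (t / 2) ^ k ≤ (k.factorial : ℝ) * Real.exp (t / 2) := by
    rw [div_le_iff₀ hfac] at h; linarith [h]
  have ht2 : t ^ k = 2 ^ k * (t / 2) ^ k := by
    rw [div_pow]; field_simp
  rw [ht2]
  calc 2 ^ k * (t / 2) ^ k ≤ 2 ^ k * ((k.factorial : ℝ) * Real.exp (t / 2)) :=
        mul_le_mul_of_nonneg_left h2 (by positivity)
    _ = 2 ^ k * (k.factorial : ℝ) * Real.exp (t / 2) := by ring

lemma contOn_f (P η : ℝ) (k : ℕ) {x y : ℝ} (hx : 0 < x) (hη : 0 ≤ η) :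
    ContinuousOn (fun l => (Real.log P - Real.log l) ^ k / (l + η)) (Set.Icc x y) := by
  have hsub : Set.Icc x y ⊆ {(0:ℝ)}ᶜ := by
    intro z hz
    simp only [Set.mem_compl_iff, Set.mem_singleton_iff]
    have := hz.1; intro h; rw [h] at this; linarith
  apply ContinuousOn.div
  · exact (continuousOn_const.sub (Real.continuousOn_log.mono hsub)).pow k
  · exact continuousOn_id.add continuousOn_const
  · intro z hz h
    have h1 := hz.1
    linarith

lemma contOn_g2 (B η : ℝ) (k : ℕ) {x y : ℝ} (hx : 0 < x) (hη : 0 ≤ η) :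
    ContinuousOn (fun l => (B - Real.log (l + η)) ^ k / (l + η)) (Set.Icc x y) := by
  have h1 : ContinuousOn (fun l : ℝ => l + η) (Set.Icc x y) :=
    continuousOn_id.add continuousOn_const
  have hne : ∀ z ∈ Set.Icc x y, z + η ≠ 0 := by
    intro z hz; have := hz.1; intro h; linarith
  have h2 : ContinuousOn (fun l : ℝ => Real.log (l + η)) (Set.Icc x y) := by
    apply Real.continuousOn_log.comp h1
    intro z hz
    simp only [Set.mem_compl_iff, Set.mem_singleton_iff]
    exact hne z hz
  exact ContinuousOn.div ((continuousOn_const.sub h2).pow k) h1 hne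

set_option maxHeartbeats 1000000 in
theorem stmt_7 (k : ℕ) :
    ∃ C : ℝ, 0 < C ∧ ∀ Λ M P η : ℝ, 0 < Λ → Λ < M → M ≤ P → 0 ≤ η → η ≤ M →
      (∫ l in Λ..M, (logPlus (P / l)) ^ k / (l + η)) <
        C * (1 + (logPlus (P / (Λ + η))) ^ (k + 1)) := by
  refine ⟨(2 ^ k + 1) * 2 ^ (k + 1) + 2 * 4 ^ k * (k.factorial : ℝ) + 1, by positivity, ?_⟩
  intro Λ M P η hΛ hΛM hMP hη hηM
  set a := logPlus (P / (Λ + η)) with ha_def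
  have ha : 0 ≤ a := logPlus_nonneg _
  have hM : 0 < M := hΛ.trans hΛM
  have hP : 0 < P := hM.trans_le hMP
  have hΛη : 0 < Λ + η := by linarith
  have hlog2 : Real.log 2 < 1 := by
    have := Real.log_two_lt_d9; linarith
  set c := max Λ η with hc_def
  have hΛc : Λ ≤ c := le_max_left _ _
  have hηc : η ≤ c := le_max_right _ _
  have hcM : c ≤ M := max_le hΛM.le hηM
  have hc0 : 0 < c := lt_of_lt_of_le hΛ hΛc
  set f : ℝ → ℝ := fun l => (Real.log P - Real.log l) ^ k / (l + η) with hf_def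
  have hint1 : IntervalIntegrable f volume Λ c := by
    have := contOn_f P η k hΛ hη (y := c)
    rw [← Set.uIcc_of_le hΛc] at this
    exact this.intervalIntegrable
  have hint2 : IntervalIntegrable f volume c M := by
    have := contOn_f P η k hc0 hη (y := M)
    rw [← Set.uIcc_of_le hcM] at this
    exact this.intervalIntegrable
  have hcongr : (∫ l in Λ..M, (logPlus (P / l)) ^ k / (l + η)) = ∫ l in Λ..M, f l := by
    apply intervalIntegral.integral_congr
    intro l hl
    rw [Set.uIcc_of_le hΛM.le] at hl
    have hl0 : 0 < l := lt_of_lt_of_le hΛ hl.1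
    have hlP : l ≤ P := le_trans hl.2 hMP
    have h1 : (1:ℝ) ≤ P / l := (one_le_div hl0).mpr hlP
    simp only [hf_def, logPlus, max_eq_right h1, Real.log_div hP.ne' hl0.ne']
  rw [hcongr, ← intervalIntegral.integral_add_adjacent_intervals hint1 hint2]
  -- piece 2
  set u : ℝ → ℝ := fun x => Real.log (2 * P) - Real.log (x + η) with hu_def
  set F₂ : ℝ → ℝ := fun l => -(Real.log (2 * P) - Real.log (l + η)) ^ (k + 1) / ((k:ℝ) + 1)
    with hF2_def
  have hint2g : IntervalIntegrable (fun l => u l ^ k / (l + η)) volume c M := by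
    have := contOn_g2 (Real.log (2 * P)) η k hc0 hη (y := M)
    rw [← Set.uIcc_of_le hcM] at this
    exact this.intervalIntegrable
  have hlog2P : Real.log (2 * P) = Real.log 2 + Real.log P := Real.log_mul two_ne_zero hP.ne'
  have hucM : 0 ≤ u M := by
    have : Real.log (M + η) ≤ Real.log (2 * P) := Real.log_le_log (by linarith) (by linarith)
    simp only [hu_def]; linarith
  have hucc0 : 0 ≤ u c := by
    have : Real.log (c + η) ≤ Real.log (2 * P) :=
      Real.log_le_log (by linarith) (by nlinarith [hcM, hMP, hηM])
    simp only [hu_def]; linarith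
  have huc : u c ≤ 1 + a := by
    have h1 : Real.log (Λ + η) ≤ Real.log (c + η) := Real.log_le_log hΛη (by linarith)
    have h2 : Real.log (P / (Λ + η)) ≤ a := log_le_logPlus (by positivity)
    rw [Real.log_div hP.ne' hΛη.ne'] at h2
    simp only [hu_def]
    linarith
  have hFTC2 : (∫ l in c..M, u l ^ k / (l + η)) = F₂ M - F₂ c := by
    apply intervalIntegral.integral_eq_sub_of_hasDerivAt _ hint2g
    intro x hx
    rw [Set.uIcc_of_le hcM] at hx
    have hx0 : 0 < x := lt_of_lt_of_le hc0 hx.1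
    have hxη : 0 < x + η := by linarith
    have h1 : HasDerivAt (fun l : ℝ => l + η) 1 x := (hasDerivAt_id x).add_const η
    have h2 : HasDerivAt (fun l : ℝ => Real.log (l + η)) ((x + η)⁻¹) x := by
      have := (Real.hasDerivAt_log hxη.ne').comp x h1
      rw [mul_one] at this; exact this
    have h3 : HasDerivAt (fun l : ℝ => Real.log (2 * P) - Real.log (l + η)) (-(x + η)⁻¹) x := by
      have := (hasDerivAt_const x (Real.log (2 * P))).sub h2
      rw [zero_sub] at this; exact this
    have h4 := h3.pow (k + 1)
    have h5 := (h4.neg).div_const ((k:ℝ) + 1)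
    have heq : u x ^ k / (x + η) =
        -(↑(k + 1) * (Real.log (2 * P) - Real.log (x + η)) ^ (k + 1 - 1) * -(x + η)⁻¹) /
          ((k:ℝ) + 1) := by
      simp only [hu_def, Nat.add_sub_cancel, Nat.cast_add, Nat.cast_one]
      have hk1 : ((k:ℝ) + 1) ≠ 0 := by positivity
      field_simp
    rw [heq]
    exact h5
  have hF2eq : F₂ M - F₂ c = ((u c) ^ (k + 1) - (u M) ^ (k + 1)) / ((k:ℝ) + 1) := by
    simp only [hF2_def, hu_def]
    ring
  have hpiece2 : (∫ l in c..M, f l) ≤ (1 + a) ^ (k + 1) := by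
    have hmono : (∫ l in c..M, f l) ≤ ∫ l in c..M, u l ^ k / (l + η) := by
      apply intervalIntegral.integral_mono_on hcM hint2 hint2g
      intro x hx
      have hx0 : 0 < x := lt_of_lt_of_le hc0 hx.1
      have hxη : 0 < x + η := by linarith
      have hnum0 : 0 ≤ Real.log P - Real.log x := by
        have := Real.log_le_log hx0 (le_trans hx.2 hMP); linarith
      have hnum : Real.log P - Real.log x ≤ u x := by
        have hηx : η ≤ x := le_trans hηc hx.1
        have h1 : Real.log (x + η) ≤ Real.log (2 * x) := Real.log_le_log hxη (by linarith)
        rw [Real.log_mul two_ne_zero hx0.ne'] at h1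
        simp only [hu_def]
        rw [hlog2P]; linarith
      simp only [hf_def]
      exact (div_le_div_iff_of_pos_right hxη).mpr (pow_le_pow_left₀ hnum0 hnum k)
    rw [hFTC2, hF2eq] at hmono
    have hA : 0 ≤ (u M) ^ (k + 1) := pow_nonneg hucM _
    have hB : (u c) ^ (k + 1) ≤ (1 + a) ^ (k + 1) := pow_le_pow_left₀ hucc0 huc _
    have hk : (0:ℝ) < (k:ℝ) + 1 := by positivity
    have hC : 0 ≤ (u c) ^ (k + 1) := pow_nonneg hucc0 _
    have key : ((u c) ^ (k + 1) - (u M) ^ (k + 1)) / ((k:ℝ) + 1) ≤ (u c) ^ (k + 1) := by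
      rw [div_le_iff₀ hk]; nlinarith
    linarith
  -- piece 1
  have hfacpos : (0:ℝ) < (k.factorial : ℝ) := by positivity
  have hpiece1 : (∫ l in Λ..c, f l) ≤
      2 ^ k * (1 + a) ^ (k + 1) + 2 * 4 ^ k * (k.factorial : ℝ) := by
    rcases le_or_gt η Λ with hcase | hcase
    · have hcΛ : c = Λ := max_eq_left hcase
      rw [hcΛ, intervalIntegral.integral_same]
      positivity
    · have hcη : c = η := max_eq_right hcase.le
      have hη0 : 0 < η := hΛ.trans hcase
      set s := Real.log P - Real.log η with hs_def
      have hs0 : 0 ≤ s := by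
        have := Real.log_le_log hη0 (le_trans hηM hMP)
        simp only [hs_def]; linarith
      have hsa : s ≤ 1 + a := by
        have h1 : Real.log (Λ + η) ≤ Real.log (2 * η) := Real.log_le_log hΛη (by linarith)
        rw [Real.log_mul two_ne_zero hη0.ne'] at h1
        have h2 : Real.log (P / (Λ + η)) ≤ a := log_le_logPlus (by positivity)
        rw [Real.log_div hP.ne' hΛη.ne'] at h2
        simp only [hs_def]; linarith
      set D : ℝ := 4 ^ k * (k.factorial : ℝ) with hD_def
      have hD0 : (0:ℝ) ≤ D := by positivity
      set g₁ : ℝ → ℝ := fun l => 2 ^ k * s ^ k / η + D * Real.sqrt η / η * (Real.sqrt l)⁻¹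
        with hg1_def
      have hsqcont : ContinuousOn (fun l : ℝ => (Real.sqrt l)⁻¹) (Set.Icc Λ c) := by
        apply ContinuousOn.inv₀ Real.continuous_sqrt.continuousOn
        intro z hz
        exact (Real.sqrt_pos.mpr (lt_of_lt_of_le hΛ hz.1)).ne'
      have hsqint : IntervalIntegrable (fun l : ℝ => (Real.sqrt l)⁻¹) volume Λ c := by
        apply ContinuousOn.intervalIntegrable
        rwa [Set.uIcc_of_le hΛc]
      have hg1int : IntervalIntegrable g₁ volume Λ c := by
        apply ContinuousOn.intervalIntegrable
        rw [Set.uIcc_of_le hΛc]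
        exact continuousOn_const.add (continuousOn_const.mul hsqcont)
      have hmono : (∫ l in Λ..c, f l) ≤ ∫ l in Λ..c, g₁ l := by
        apply intervalIntegral.integral_mono_on hΛc hint1 hg1int
        intro x hx
        have hx0 : 0 < x := lt_of_lt_of_le hΛ hx.1
        have hxη : x ≤ η := hcη ▸ hx.2
        set t := Real.log η - Real.log x with ht_def
        have ht0 : 0 ≤ t := by
          have := Real.log_le_log hx0 hxη
          simp only [ht_def]; linarith
        have hnum0 : 0 ≤ Real.log P - Real.log x := by
          have := Real.log_le_log hx0 (le_trans hxη (le_trans hηM hMP))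
          linarith
        have hsplit : Real.log P - Real.log x = s + t := by
          simp only [hs_def, ht_def]; ring
        have hexp : Real.exp (t / 2) = Real.sqrt η * (Real.sqrt x)⁻¹ := by
          rw [show t / 2 = Real.log η / 2 - Real.log x / 2 by simp only [ht_def]; ring,
            Real.exp_sub, exp_half_log hη0, exp_half_log hx0, div_eq_mul_inv]
        have htk : t ^ k ≤ 2 ^ k * (k.factorial : ℝ) * (Real.sqrt η * (Real.sqrt x)⁻¹) := by
          rw [← hexp]; exact pow_le_exp_half k ht0
        have hnumb : (Real.log P - Real.log x) ^ k ≤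
            2 ^ k * s ^ k + D * (Real.sqrt η * (Real.sqrt x)⁻¹) := by
          rw [hsplit]
          calc (s + t) ^ k ≤ 2 ^ k * (s ^ k + t ^ k) := two_pow_bound k hs0 ht0
            _ = 2 ^ k * s ^ k + 2 ^ k * t ^ k := by ring
            _ ≤ 2 ^ k * s ^ k + 2 ^ k * (2 ^ k * (k.factorial : ℝ) *
                  (Real.sqrt η * (Real.sqrt x)⁻¹)) := by
                exact add_le_add (le_refl _)
                  (mul_le_mul_of_nonneg_left htk (by positivity))
            _ = 2 ^ k * s ^ k + D * (Real.sqrt η * (Real.sqrt x)⁻¹) := by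
                simp only [hD_def]
                rw [show (4:ℝ) ^ k = 2 ^ k * 2 ^ k by rw [← mul_pow]; norm_num]
                ring
        have step1 : f x ≤ (Real.log P - Real.log x) ^ k / η := by
          simp only [hf_def]
          exact div_le_div_of_nonneg_left (pow_nonneg hnum0 k) hη0 (by linarith)
        have step2 : (Real.log P - Real.log x) ^ k / η ≤ g₁ x := by
          have h1 : (Real.log P - Real.log x) ^ k / η ≤
              (2 ^ k * s ^ k + D * (Real.sqrt η * (Real.sqrt x)⁻¹)) / η :=
            (div_le_div_iff_of_pos_right hη0).mpr hnumb
          calc (Real.log P - Real.log x) ^ k / η ≤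
              (2 ^ k * s ^ k + D * (Real.sqrt η * (Real.sqrt x)⁻¹)) / η := h1
            _ = g₁ x := by simp only [hg1_def]; ring
        exact le_trans step1 step2
      have hderiv : ∀ x ∈ Set.uIcc Λ c,
          HasDerivAt (fun l : ℝ => 2 * Real.sqrt l) ((Real.sqrt x)⁻¹) x := by
        intro x hx
        rw [Set.uIcc_of_le hΛc] at hx
        have hx0 : 0 < x := lt_of_lt_of_le hΛ hx.1
        have hsx : 0 < Real.sqrt x := Real.sqrt_pos.mpr hx0
        have h := (Real.hasDerivAt_sqrt hx0.ne').const_mul (2:ℝ)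
        have heq : (Real.sqrt x)⁻¹ = 2 * (1 / (2 * Real.sqrt x)) := by
          field_simp
        rw [heq]
        exact h
      have hsqrtFTC : (∫ l in Λ..c, (Real.sqrt l)⁻¹) =
          2 * Real.sqrt c - 2 * Real.sqrt Λ := by
        simpa using intervalIntegral.integral_eq_sub_of_hasDerivAt hderiv hsqint
      have hg1val : (∫ l in Λ..c, g₁ l) =
          (c - Λ) * (2 ^ k * s ^ k / η) +
            (D * Real.sqrt η / η) * (2 * Real.sqrt c - 2 * Real.sqrt Λ) := by
        simp only [hg1_def]
        rw [intervalIntegral.integral_add intervalIntegrable_const (hsqint.const_mul _),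
          intervalIntegral.integral_const, intervalIntegral.integral_const_mul, hsqrtFTC]
        simp only [smul_eq_mul]
      have e1 : (c - Λ) * (2 ^ k * s ^ k / η) ≤ 2 ^ k * s ^ k := by
        rw [hcη]
        have hX : (0:ℝ) ≤ 2 ^ k * s ^ k / η := by positivity
        calc (η - Λ) * (2 ^ k * s ^ k / η) ≤ η * (2 ^ k * s ^ k / η) :=
              mul_le_mul_of_nonneg_right (by linarith) hX
          _ = 2 ^ k * s ^ k := by field_simp
      have e2 : (D * Real.sqrt η / η) * (2 * Real.sqrt c - 2 * Real.sqrt Λ) ≤ 2 * D := by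
        rw [hcη]
        have h1 : (0:ℝ) ≤ D * Real.sqrt η / η := by positivity
        have h2 : 2 * Real.sqrt η - 2 * Real.sqrt Λ ≤ 2 * Real.sqrt η := by
          have := Real.sqrt_nonneg Λ; linarith
        calc (D * Real.sqrt η / η) * (2 * Real.sqrt η - 2 * Real.sqrt Λ) ≤
            (D * Real.sqrt η / η) * (2 * Real.sqrt η) := mul_le_mul_of_nonneg_left h2 h1
          _ = 2 * D * (Real.sqrt η * Real.sqrt η) / η := by ring
          _ = 2 * D := by rw [Real.mul_self_sqrt hη0.le]; field_simp
      have e3 : s ^ k ≤ (1 + a) ^ (k + 1) :=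
        le_trans (pow_le_pow_left₀ hs0 hsa k) (pow_le_pow_right₀ (by linarith) (Nat.le_succ k))
      have e4 : 2 ^ k * s ^ k ≤ 2 ^ k * (1 + a) ^ (k + 1) :=
        mul_le_mul_of_nonneg_left e3 (by positivity)
      calc (∫ l in Λ..c, f l) ≤ ∫ l in Λ..c, g₁ l := hmono
        _ = (c - Λ) * (2 ^ k * s ^ k / η) +
            (D * Real.sqrt η / η) * (2 * Real.sqrt c - 2 * Real.sqrt Λ) := hg1val
        _ ≤ 2 ^ k * s ^ k + 2 * D := add_le_add e1 e2
        _ ≤ 2 ^ k * (1 + a) ^ (k + 1) + 2 * 4 ^ k * (k.factorial : ℝ) := by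
            simp only [hD_def]
            linarith
  -- assemble
  have hpow : (1 + a) ^ (k + 1) ≤ 2 ^ (k + 1) * (1 + a ^ (k + 1)) := by
    have h := two_pow_bound (k + 1) zero_le_one ha
    simpa using h
  have h1a : (1:ℝ) ≤ 1 + a ^ (k + 1) := by
    have := pow_nonneg ha (k + 1); linarith
  have hpos1a : (0:ℝ) < 1 + a ^ (k + 1) := by linarith
  calc (∫ l in Λ..c, f l) + (∫ l in c..M, f l) ≤
      (2 ^ k * (1 + a) ^ (k + 1) + 2 * 4 ^ k * (k.factorial : ℝ)) + (1 + a) ^ (k + 1) :=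
        add_le_add hpiece1 hpiece2
    _ = (2 ^ k + 1) * (1 + a) ^ (k + 1) + 2 * 4 ^ k * (k.factorial : ℝ) := by ring
    _ ≤ (2 ^ k + 1) * (2 ^ (k + 1) * (1 + a ^ (k + 1))) +
        2 * 4 ^ k * (k.factorial : ℝ) * (1 + a ^ (k + 1)) := by
        have t1 : (2 ^ k + 1 : ℝ) * (1 + a) ^ (k + 1) ≤
            (2 ^ k + 1) * (2 ^ (k + 1) * (1 + a ^ (k + 1))) :=
          mul_le_mul_of_nonneg_left hpow (by positivity)
        have t2 : 2 * 4 ^ k * (k.factorial : ℝ) ≤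
            2 * 4 ^ k * (k.factorial : ℝ) * (1 + a ^ (k + 1)) :=
          le_mul_of_one_le_right (by positivity) h1a
        linarith
    _ = ((2 ^ k + 1) * 2 ^ (k + 1) + 2 * 4 ^ k * (k.factorial : ℝ)) * (1 + a ^ (k + 1)) := by
        ring
    _ < ((2 ^ k + 1) * 2 ^ (k + 1) + 2 * 4 ^ k * (k.factorial : ℝ) + 1) * (1 + a ^ (k + 1)) := by
        nlinarith [hpos1a]
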